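/- Let F be a field and E a primitive quartic extension of F, i.e. a separable extension with [E:F] = 4 having no intermediate fields other than F and E. Then the Galois group Gal(D|F) of the Galois closure D of E over F is isomorphic either to the alternating group A_4 or to the symmetric group S_4. -/

import Mathlib

open IntermediateField

/-- Conjugating permutations by an equivalence, as a `MulEquiv`. -/
def permCongrHom {α β : Type*} (e : α ≃ β) : Equiv.Perm α ≃* Equiv.Perm β :=
  { e.permCongr with
    map_mul' := fun p q => by ext x; simp [Equiv.permCongr_apply] }

lemma aux_pgroup {G : Type*} [Group G] [Finite G] {H : Subgroup G}
    (hmax : ∀ K : Subgroup G, H ≤ K → K = H ∨ K = ⊤) (hidx : H.index = 4)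
    (hpg : IsPGroup 2 G) : False := by
  classical
  have hne : H ≠ ⊤ := by
    intro h
    rw [h, Subgroup.index_top] at hidx
    norm_num at hidx
  haveI : Fact (Nat.Prime 2) := ⟨Nat.prime_two⟩
  have hnc : NormalizerCondition G := normalizerCondition_of_isNilpotent (h := hpg.isNilpotent)
  have hlt : H < Subgroup.normalizer (H : Set G) := hnc H (lt_top_iff_ne_top.mpr hne)
  have hHn : Subgroup.normalizer (H : Set G) = ⊤ := by
    rcases hmax (Subgroup.normalizer (H : Set G)) Subgroup.le_normalizer with h | h
    · exact absurd h (ne_of_gt hlt)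
    · exact h
  haveI : H.Normal := Subgroup.normalizer_eq_top_iff.mp hHn
  have hq : Nat.card (G ⧸ H) = 4 := hidx
  haveI : Fintype (G ⧸ H) := Fintype.ofFinite _
  obtain ⟨g, hg⟩ := exists_prime_orderOf_dvd_card (G := G ⧸ H) 2
    (by rw [← Nat.card_eq_fintype_card, hq]; norm_num)
  set K' := Subgroup.zpowers g with hK'
  have hcardK' : Nat.card K' = 2 := by rw [hK', Nat.card_zpowers, hg]
  set K := K'.comap (QuotientGroup.mk' H) with hK
  have hHK : H ≤ K := by
    intro h hh
    simp only [hK, Subgroup.mem_comap]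
    have : (QuotientGroup.mk' H) h = 1 := by
      rwa [← QuotientGroup.ker_mk' H, MonoidHom.mem_ker] at hh
    rw [this]; exact one_mem _
  have hmap : K.map (QuotientGroup.mk' H) = K' :=
    Subgroup.map_comap_eq_self_of_surjective (QuotientGroup.mk'_surjective H) _
  rcases hmax K hHK with h | h
  · rw [h] at hmap
    have : K' = ⊥ := by
      rw [← hmap]
      refine (Subgroup.map_eq_bot_iff _).mpr ?_
      rw [QuotientGroup.ker_mk']
    rw [this, Nat.card_eq_fintype_card] at hcardK'
    simp at hcardK'
  · rw [h] at hmap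
    rw [Subgroup.map_top_of_surjective _ (QuotientGroup.mk'_surjective H)] at hmap
    rw [← hmap, Subgroup.card_top, hq] at hcardK'
    norm_num at hcardK'

theorem stmt12 {F D : Type*} [Field F] [Field D] [Algebra F D]
    [FiniteDimensional F D] [IsGalois F D]
    (E : IntermediateField F D) (hdeg : Module.finrank F E = 4)
    (hprim : ∀ K : IntermediateField F D, K ≤ E → K = ⊥ ∨ K = E)
    (hclos : normalClosure F E D = ⊤) :
    Nonempty ((D ≃ₐ[F] D) ≃* alternatingGroup (Fin 4)) ∨
      Nonempty ((D ≃ₐ[F] D) ≃* Equiv.Perm (Fin 4)) := by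
  classical
  set G := (D ≃ₐ[F] D)
  set H := E.fixingSubgroup with hH
  have hfixE : IntermediateField.fixedField H = E := IsGalois.fixedField_fixingSubgroup E
  -- maximality of H
  have hmax : ∀ K : Subgroup G, H ≤ K → K = H ∨ K = ⊤ := by
    intro K hK
    have h1 : IntermediateField.fixedField K ≤ E := by
      rw [← hfixE]
      intro x hx
      exact fun g => hx ⟨g.1, hK g.2⟩
    rcases hprim _ h1 with h | h
    · right
      rw [← IntermediateField.fixingSubgroup_fixedField K, h,
        IntermediateField.fixingSubgroup_bot]
    · left
      rw [← IntermediateField.fixingSubgroup_fixedField K, h]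
  -- cardinalities
  have hcardG : Nat.card G = 4 * Nat.card H := by
    have e1 : Nat.card G = Module.finrank F D := by
      rw [IsGalois.card_aut_eq_finrank]
    have e2 : Nat.card H = Module.finrank E D := by
      rw [Nat.card_congr (IntermediateField.fixingSubgroupEquiv E).toEquiv,
        IsGalois.card_aut_eq_finrank]
    rw [e1, e2, ← hdeg]
    exact (Module.finrank_mul_finrank F E D).symm
  have hcardHpos : 0 < Nat.card H := Nat.card_pos
  have hidx : H.index = 4 := by
    have := Subgroup.index_mul_card H
    rw [hcardG] at this
    exact Nat.eq_of_mul_eq_mul_right hcardHpos this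
  -- triviality of the normal core
  have hcore : H.normalCore = ⊥ := by
    have hle : normalClosure F E D ≤ IntermediateField.fixedField H.normalCore := by
      rw [normalClosure_le_iff]
      intro f
      rintro x ⟨y, rfl⟩
      intro g
      have hb := AlgHom.normal_bijective F D D (f.liftNormal D)
      set σ : G := AlgEquiv.ofBijective (f.liftNormal D) hb with hσ
      have hcomm : σ (y : D) = f y := by
        have := AlgHom.liftNormal_commutes f D y
        exact this
      have hgH : σ⁻¹ * g.1 * σ ∈ H := by
        have := g.2 σ⁻¹
        simpa using this
      rw [IntermediateField.mem_fixingSubgroup_iff] at hgH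
      have := hgH (y : D) y.2
      have h2 : σ⁻¹ (g.1 (σ (y : D))) = (y : D) := this
      show g.1 (f y) = f y
      rw [← hcomm]
      calc g.1 (σ (y : D)) = σ (σ⁻¹ (g.1 (σ (y : D)))) := by
            rw [show ∀ z : D, σ (σ⁻¹ z) = z from fun z => σ.apply_symm_apply z]
        _ = σ (y : D) := by rw [h2]
    have hff : IntermediateField.fixedField H.normalCore = ⊤ :=
      le_antisymm le_top (hclos ▸ hle)
    rw [← IntermediateField.fixingSubgroup_fixedField H.normalCore, hff,
      IntermediateField.fixingSubgroup_top]
  -- the permutation representation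
  set φ := MulAction.toPermHom G (G ⧸ H) with hφ
  have hkerφ : φ.ker = ⊥ := by rw [← Subgroup.normalCore_eq_ker, hcore]
  have hinjφ : Function.Injective φ := (MonoidHom.ker_eq_bot_iff φ).mp hkerφ
  have hqcard : Nat.card (G ⧸ H) = 4 := hidx
  let e : (G ⧸ H) ≃ Fin 4 := Finite.equivFinOfCardEq hqcard
  set ψ : G →* Equiv.Perm (Fin 4) := (permCongrHom e).toMonoidHom.comp φ with hψ
  have hinjψ : Function.Injective ψ :=
    (permCongrHom e).injective.comp hinjφ
  have hcardR : Nat.card ψ.range = Nat.card G :=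
    (Nat.card_congr (MonoidHom.ofInjective hinjψ).toEquiv).symm
  have hcardS4 : Nat.card (Equiv.Perm (Fin 4)) = 24 := by
    simp [Nat.card_eq_fintype_card, Fintype.card_perm]
    decide
  have hdvd : Nat.card G ∣ 24 := by
    rw [← hcardS4, ← hcardR]
    exact Subgroup.card_subgroup_dvd_card ψ.range
  have hmdvd : Nat.card H ∣ 6 := by
    have : 4 * Nat.card H ∣ 4 * 6 := by rw [← hcardG]; exact hdvd
    exact (mul_dvd_mul_iff_left (by norm_num : (4:ℕ) ≠ 0)).mp this
  have hmem : Nat.card H ∈ Nat.divisors 6 := Nat.mem_divisors.mpr ⟨hmdvd, by norm_num⟩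
  have h6 : Nat.divisors 6 = {1, 2, 3, 6} := by decide
  rw [h6] at hmem
  simp only [Finset.mem_insert, Finset.mem_singleton] at hmem
  rcases hmem with h1 | h1 | h1 | h1
  -- card H = 1 : |G| = 4, a 2-group, contradiction
  · exfalso
    refine aux_pgroup hmax hidx (IsPGroup.of_card (n := 2) ?_)
    rw [hcardG, h1]; norm_num
  -- card H = 2 : |G| = 8, a 2-group, contradiction
  · exfalso
    refine aux_pgroup hmax hidx (IsPGroup.of_card (n := 3) ?_)
    rw [hcardG, h1]; norm_num
  -- card H = 3 : |G| = 12, G ≃ A4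
  · left
    have hG12 : Nat.card G = 12 := by rw [hcardG, h1]
    have hidxR : ψ.range.index = 2 := by
      have := Subgroup.card_mul_index ψ.range
      rw [hcardR, hG12, hcardS4] at this
      omega
    have hA4le : alternatingGroup (Fin 4) ≤ ψ.range := by
      rw [← Equiv.Perm.closure_three_cycles_eq_alternating]
      rw [Subgroup.closure_le]
      intro σ hσ
      have ho : orderOf σ = 3 := hσ.orderOf
      have h4 : σ ^ 4 = σ := by
        have h3 : σ ^ 3 = 1 := by rw [← ho]; exact pow_orderOf_eq_one σ
        calc σ ^ 4 = σ ^ 3 * σ := by rw [pow_succ]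
          _ = σ := by rw [h3, one_mul]
      have : (σ ^ 2) ^ 2 ∈ ψ.range := Subgroup.sq_mem_of_index_two hidxR (σ ^ 2)
      rwa [← pow_mul, show 2 * 2 = 4 from rfl, h4] at this
    have hA4card : Nat.card (alternatingGroup (Fin 4)) = 12 := by
      have h2 := two_mul_card_alternatingGroup (α := Fin 4)
      have h3 : Fintype.card (Equiv.Perm (Fin 4)) = 24 := by
        rw [Fintype.card_perm]; decide
      rw [h3, Nat.card_eq_fintype_card] at *
      omega
    have hReq : alternatingGroup (Fin 4) = ψ.range := by
      apply Subgroup.eq_of_le_of_card_ge hA4le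
      rw [hcardR, hG12, hA4card]
    exact ⟨(MonoidHom.ofInjective hinjψ).trans (MulEquiv.subgroupCongr hReq.symm)⟩
  -- card H = 6 : |G| = 24, G ≃ S4
  · right
    have hG24 : Nat.card G = 24 := by rw [hcardG, h1]
    have hReq : ψ.range = ⊤ := Subgroup.eq_top_of_card_eq _ (by rw [hcardR, hG24, hcardS4])
    exact ⟨((MonoidHom.ofInjective hinjψ).trans
      (MulEquiv.subgroupCongr hReq)).trans Subgroup.topEquiv⟩
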